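/- Let γ > 1. There exist constants C > 0 and ε₀ ∈ (0,1) such that for all ρ̄, θ̄, ρ, θ > 0 and u, ū ∈ ℝ with |θ/θ̄ − 1| ≤ ε₀ and |ρ̄/ρ − 1| ≤ ε₀, the quantity H = ρψ² + (γ−1) ρ θ̄ Φ(θ/θ̄) + (γ−1)² ρ θ̄ Φ(ρ̄/ρ) + √((γ−1)/γ) θ̄^{1/2} ρ ψ [(γ−1) log(ρ̄/ρ) + log(θ/θ̄)], where ψ = u − ū and Φ(z) = z − log z − 1, satisfies H ≥ C [ρ̄ ψ² + (θ̄/ρ̄) φ² + (ρ̄/θ̄) ζ²], where φ = ρ − ρ̄ and ζ = θ − θ̄. -/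

import Mathlib

set_option maxHeartbeats 1000000

lemma log_lower {z : ℝ} (hz : 0 < z) : (z - 1)/z ≤ Real.log z := by
  have h := Real.log_le_sub_one_of_pos (show (0:ℝ) < z⁻¹ by positivity)
  rw [Real.log_inv] at h
  have h2 : 1 - z⁻¹ ≤ Real.log z := by linarith
  have : (z - 1)/z = 1 - z⁻¹ := by field_simp
  linarith [this ▸ h2, (by field_simp : (z - 1)/z = 1 - z⁻¹)]

lemma log_range {z : ℝ} (hz : 0 < z) (h : |z - 1| ≤ 1/20) :
    -1/19 ≤ Real.log z ∧ Real.log z ≤ 1/20 := by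
  obtain ⟨h1, h2⟩ := abs_le.mp h
  have hlo := log_lower hz
  have hhi := Real.log_le_sub_one_of_pos hz
  constructor
  · have hz19 : (19:ℝ)/20 ≤ z := by linarith
    have : (-1/19 : ℝ) ≤ (z - 1)/z := by
      rw [le_div_iff₀ hz]; nlinarith
    linarith
  · linarith

lemma phi_quad {z : ℝ} (hz : 0 < z) (h : |z - 1| ≤ 1/20) :
    37/100 * (Real.log z)^2 ≤ z - Real.log z - 1 := by
  set t := Real.log z with ht
  obtain ⟨hlo, hhi⟩ := log_range hz h
  have hexp : Real.exp t = z := Real.exp_log hz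
  have h4 : Real.exp (t/4) ^ 4 = z := by
    rw [← Real.exp_nat_mul]; push_cast; rw [show (4:ℝ) * (t/4) = t by ring, hexp]
  have hb : 1 + t/4 ≤ Real.exp (t/4) := by have := Real.add_one_le_exp (t/4); linarith
  have hpos : (0:ℝ) ≤ 1 + t/4 := by linarith
  have hz4 : (1 + t/4)^4 ≤ z := by
    rw [← h4]; exact pow_le_pow_left₀ hpos hb 4
  nlinarith [mul_le_mul_of_nonneg_right hlo (sq_nonneg t), sq_nonneg t, sq_nonneg (t^2)]

lemma logsq_ge {z : ℝ} (hz : 0 < z) (h : |z - 1| ≤ 1/20) :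
    400/441 * (z - 1)^2 ≤ (Real.log z)^2 := by
  obtain ⟨h1, h2⟩ := abs_le.mp h
  have hlo := log_lower hz
  have hhi := Real.log_le_sub_one_of_pos hz
  rcases le_or_gt 1 z with hc | hc
  · have ht0 : 0 ≤ (z - 1)/z := div_nonneg (by linarith) hz.le
    have h1' : z - 1 ≤ Real.log z * z := by
      have := (div_le_iff₀ hz).mp hlo; linarith
    have hlog0 : 0 ≤ Real.log z := le_trans ht0 hlo
    nlinarith [sq_nonneg (Real.log z * z - (z-1)), mul_le_mul_of_nonneg_left h1' hlog0]
  · have hlog0 : Real.log z ≤ z - 1 := hhi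
    nlinarith

lemma quad_main (γ ρ θb ψ t s k r Pa Pb : ℝ)
    (hγ : 1 < γ) (hρ : 0 ≤ ρ) (hθb : 0 ≤ θb)
    (hk2 : k^2 = (γ-1)/γ) (hr2 : r^2 = θb)
    (hpa : 37/100*t^2 ≤ Pa) (hpb : 37/100*s^2 ≤ Pb) :
    1/20*(ρ*ψ^2) + 1/10*((γ-1)*(ρ*θb)*t^2) + 1/10*((γ-1)^2*(ρ*θb)*s^2)
      ≤ ρ*ψ^2 + (γ-1)*ρ*θb*Pa + (γ-1)^2*ρ*θb*Pb + k*r*ρ*ψ*((γ-1)*s+t) := by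
  have hγ0 : (0:ℝ) < γ := by linarith
  have hγ1 : (0:ℝ) < γ - 1 := by linarith
  have A1 : (0:ℝ) ≤ ρ*(19*ψ + 10*(k*(r*((γ-1)*s+t))))^2 :=
    mul_nonneg hρ (sq_nonneg _)
  have hLcs : ((γ-1)*s+t)^2 ≤ γ*(t^2 + (γ-1)*s^2) := by
    nlinarith [mul_nonneg hγ1.le (sq_nonneg (t - s))]
  have A2 : (k*(r*((γ-1)*s+t)))^2 ≤ (γ-1)*θb*(t^2 + (γ-1)*s^2) := by
    have e : (k*(r*((γ-1)*s+t)))^2 = (γ-1)/γ * θb * ((γ-1)*s+t)^2 := by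
      rw [mul_pow, mul_pow, hk2, hr2]; ring
    rw [e]
    calc (γ-1)/γ * θb * ((γ-1)*s+t)^2 ≤ (γ-1)/γ * θb * (γ*(t^2 + (γ-1)*s^2)) := by
          apply mul_le_mul_of_nonneg_left hLcs (by positivity)
    _ = (γ-1)*θb*(t^2 + (γ-1)*s^2) := by field_simp
  have A2' : ρ*(k*(r*((γ-1)*s+t)))^2 ≤ ρ*((γ-1)*θb*(t^2 + (γ-1)*s^2)) :=
    mul_le_mul_of_nonneg_left A2 hρ
  have hpa' : (γ-1)*(ρ*θb)*(37/100*t^2) ≤ (γ-1)*(ρ*θb)*Pa :=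
    mul_le_mul_of_nonneg_left hpa (by positivity)
  have hpb' : (γ-1)^2*(ρ*θb)*(37/100*s^2) ≤ (γ-1)^2*(ρ*θb)*Pb :=
    mul_le_mul_of_nonneg_left hpb (by positivity)
  have N1 : (0:ℝ) ≤ (γ-1)*(ρ*θb)*t^2 := by positivity
  have N2 : (0:ℝ) ≤ (γ-1)^2*(ρ*θb)*s^2 := by positivity
  nlinarith [A1, A2', hpa', hpb', N1, N2]

lemma B1aux (m ρ ρb ψ : ℝ) (hρb : 0 < ρb) (hm2 : m^2 ≤ 1) (hρhi : ρb ≤ 21/20*ρ) :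
    m^2/25*(ρb*ψ^2) ≤ 1/20*(ρ*ψ^2) := by
  nlinarith [mul_le_mul_of_nonneg_right hρhi (sq_nonneg ψ),
    mul_le_mul_of_nonneg_right hm2 (mul_nonneg hρb.le (sq_nonneg ψ))]

lemma B2aux (m γ ρ ρb θb θ t : ℝ) (hθb : 0 < θb) (hρb : 0 < ρb) (hρ : 0 < ρ)
    (hγ1 : 0 < γ - 1) (hm2γ : m^2 ≤ γ-1) (hρhi : ρb ≤ 21/20*ρ)
    (hta' : 400/441*(θ-θb)^2 ≤ t^2*θb^2) :
    m^2/25*(ρb/θb*(θ-θb)^2) ≤ 1/10*((γ-1)*(ρ*θb)*t^2) := by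
  rw [show m^2/25*(ρb/θb*(θ-θb)^2) = m^2*(ρb*(θ-θb)^2)/(25*θb) by ring,
    div_le_iff₀ (by positivity : (0:ℝ) < 25*θb)]
  nlinarith [mul_le_mul_of_nonneg_left hta' (mul_nonneg hγ1.le hρ.le),
    mul_le_mul_of_nonneg_left (mul_le_mul_of_nonneg_right hρhi (sq_nonneg (θ-θb))) hγ1.le,
    mul_le_mul_of_nonneg_right hm2γ (mul_nonneg hρb.le (sq_nonneg (θ-θb))),
    mul_nonneg (mul_nonneg hγ1.le hρ.le) (mul_nonneg (sq_nonneg t) (sq_nonneg θb))]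

lemma B3aux (m γ ρ ρb θb s : ℝ) (hθb : 0 < θb) (hρb : 0 < ρb) (hρ : 0 < ρ)
    (hγ1 : 0 < γ - 1) (hm2γ2 : m^2 ≤ (γ-1)^2) (hρlo : 19/20*ρ ≤ ρb)
    (htb' : 400/441*(ρ-ρb)^2 ≤ s^2*ρ^2) :
    m^2/25*(θb/ρb*(ρ-ρb)^2) ≤ 1/10*((γ-1)^2*(ρ*θb)*s^2) := by
  rw [show m^2/25*(θb/ρb*(ρ-ρb)^2) = m^2*(θb*(ρ-ρb)^2)/(25*ρb) by ring,
    div_le_iff₀ (by positivity : (0:ℝ) < 25*ρb)]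
  have f2 : 19/20*ρ*ρ ≤ ρb*ρ := mul_le_mul_of_nonneg_right hρlo hρ.le
  nlinarith [mul_le_mul_of_nonneg_left htb' (mul_nonneg (sq_nonneg (γ-1)) hθb.le),
    mul_le_mul_of_nonneg_right f2 (mul_nonneg (mul_nonneg (sq_nonneg (γ-1)) hθb.le) (sq_nonneg s)),
    mul_le_mul_of_nonneg_right hm2γ2 (mul_nonneg hθb.le (sq_nonneg (ρ-ρb))),
    mul_nonneg (mul_nonneg (mul_nonneg (sq_nonneg (γ-1)) hθb.le) (sq_nonneg s)) (mul_nonneg hρ.le hρb.le)]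


/-- the entropy dissipation quantity H controls the weighted
quadratic quantity ρ̄ψ² + (θ̄/ρ̄)φ² + (ρ̄/θ̄)ζ², uniformly for states with
θ/θ̄ and ρ̄/ρ sufficiently close to 1. -/
theorem entropy_dissipation_coercivity
    (γ : ℝ) (hγ : 1 < γ)
    (Φ : ℝ → ℝ) (hΦ : ∀ z, Φ z = z - Real.log z - 1) :
    ∃ C > (0 : ℝ), ∃ ε₀ ∈ Set.Ioo (0 : ℝ) 1,
      ∀ ρb θb ρ θ u ub : ℝ,
        0 < ρb → 0 < θb → 0 < ρ → 0 < θ →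
        |θ / θb - 1| ≤ ε₀ → |ρb / ρ - 1| ≤ ε₀ →
        C * (ρb * (u - ub) ^ 2 + θb / ρb * (ρ - ρb) ^ 2 + ρb / θb * (θ - θb) ^ 2)
          ≤ ρ * (u - ub) ^ 2 + (γ - 1) * ρ * θb * Φ (θ / θb)
            + (γ - 1) ^ 2 * ρ * θb * Φ (ρb / ρ)
            + Real.sqrt ((γ - 1) / γ) * Real.sqrt θb * ρ * (u - ub)
              * ((γ - 1) * Real.log (ρb / ρ) + Real.log (θ / θb)) := by
  have hγ0 : (0:ℝ) < γ := by linarith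
  have hγ1 : (0:ℝ) < γ - 1 := by linarith
  have hm0 : (0:ℝ) < min 1 (γ - 1) := lt_min one_pos hγ1
  have hm1 : min 1 (γ - 1) ≤ 1 := min_le_left _ _
  have hmγ : min 1 (γ - 1) ≤ γ - 1 := min_le_right _ _
  refine ⟨(min 1 (γ - 1))^2/25, by positivity, 1/20, by constructor <;> norm_num, ?_⟩
  intro ρb θb ρ θ u ub hρb hθb hρ hθ hθε hρε
  set m := min 1 (γ - 1) with hm
  have hm2 : m^2 ≤ 1 := by nlinarith
  have hm2γ : m^2 ≤ γ - 1 := by nlinarith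
  have hm2γ2 : m^2 ≤ (γ - 1)^2 := by nlinarith
  have ha0 : 0 < θ/θb := by positivity
  have hb0 : 0 < ρb/ρ := by positivity
  set t := Real.log (θ/θb) with hts
  set s := Real.log (ρb/ρ) with hss
  set ψ := u - ub with hψ
  set k := Real.sqrt ((γ-1)/γ) with hk
  set r := Real.sqrt θb with hr
  have hk2 : k^2 = (γ-1)/γ := Real.sq_sqrt (by positivity)
  have hr2 : r^2 = θb := Real.sq_sqrt hθb.le
  rw [hΦ, hΦ]
  have hta : 400/441*(θ/θb - 1)^2 ≤ t^2 := logsq_ge ha0 hθε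
  have htb : 400/441*(ρb/ρ - 1)^2 ≤ s^2 := logsq_ge hb0 hρε
  have hpa : 37/100*t^2 ≤ θ/θb - t - 1 := phi_quad ha0 hθε
  have hpb : 37/100*s^2 ≤ ρb/ρ - s - 1 := phi_quad hb0 hρε
  obtain ⟨hρε1, hρε2⟩ := abs_le.mp hρε
  have hρhi : ρb ≤ 21/20 * ρ := by
    have h : ρb/ρ ≤ 21/20 := by linarith
    calc ρb = ρb/ρ * ρ := by field_simp
    _ ≤ 21/20 * ρ := mul_le_mul_of_nonneg_right h hρ.le
  have hρlo : 19/20 * ρ ≤ ρb := by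
    have h : 19/20 ≤ ρb/ρ := by linarith
    calc 19/20 * ρ ≤ ρb/ρ * ρ := mul_le_mul_of_nonneg_right h hρ.le
    _ = ρb := by field_simp
  have hmain := quad_main γ ρ θb ψ t s k r (θ/θb - t - 1) (ρb/ρ - s - 1)
    hγ hρ.le hθb.le hk2 hr2 hpa hpb
  have B1 := B1aux m ρ ρb ψ hρb hm2 hρhi
  have hta2 : 400/441*(θ - θb)^2 ≤ t^2*θb^2 := by
    have e1 : θ - θb = (θ/θb - 1)*θb := by field_simp
    rw [e1]
    nlinarith [mul_le_mul_of_nonneg_right hta (sq_nonneg θb)]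
  have htb2 : 400/441*(ρ - ρb)^2 ≤ s^2*ρ^2 := by
    have e1 : ρ - ρb = -((ρb/ρ - 1)*ρ) := by field_simp; ring
    rw [e1]
    nlinarith [mul_le_mul_of_nonneg_right htb (sq_nonneg ρ)]
  have B2 := B2aux m γ ρ ρb θb θ t hθb hρb hρ hγ1 hm2γ hρhi hta2
  have B3 := B3aux m γ ρ ρb θb s hθb hρb hρ hγ1 hm2γ2 hρlo htb2
  linarith [B1, B2, B3, hmain]
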